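/- arXiv:1505.06417 — 3 statements merged into one kernel-verified Lean document; each statement's English description precedes it below -/
import Mathlib

section
/- The function h(u) = (2/(B(d,m)·u))·p(u)^d·(1-p(u))^m on (0,∞), where p(u) = δ/(δ + k·u²), is a probability density: ∫_0^∞ h(u) du = 1. -/
open Real Set MeasureTheory

-- real beta integral for naturals
lemma real_beta (d m : ℕ) (hd : 1 ≤ d) (hm : 1 ≤ m) :
    Real.Gamma d * Real.Gamma m
      = Real.Gamma (d + m) * ∫ x in (0:ℝ)..1, x ^ (d-1) * (1-x) ^ (m-1) := by
  have hd' : (0:ℝ) < (d:ℝ) := by exact_mod_cast hd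
  have hm' : (0:ℝ) < (m:ℝ) := by exact_mod_cast hm
  have h := Complex.Gamma_mul_Gamma_eq_betaIntegral (s := (d:ℂ)) (t := (m:ℂ))
    (by simpa using hd') (by simpa using hm')
  have hbeta : Complex.betaIntegral (d:ℂ) (m:ℂ)
      = ((∫ x in (0:ℝ)..1, x ^ (d-1) * (1-x) ^ (m-1) : ℝ) : ℂ) := by
    rw [Complex.betaIntegral, ← intervalIntegral.integral_ofReal]
    refine intervalIntegral.integral_congr fun x hx => ?_
    have h1 : ((d:ℂ) - 1) = ((d - 1 : ℕ) : ℂ) := by push_cast [Nat.cast_sub hd]; ring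
    have h2 : ((m:ℂ) - 1) = ((m - 1 : ℕ) : ℂ) := by push_cast [Nat.cast_sub hm]; ring
    rw [h1, h2, Complex.cpow_natCast, Complex.cpow_natCast]
    push_cast
    ring
  rw [hbeta] at h
  have := congrArg Complex.re h
  simpa [← Complex.ofReal_natCast, Complex.Gamma_ofReal, ← Complex.ofReal_mul,
    ← Complex.ofReal_add] using this

theorem predictive_density_integrates_to_one (d m : ℕ) (hd : 1 ≤ d) (hm : 1 ≤ m)
    (k δ : ℝ) (hk : 0 < k) (hδ : 0 < δ) :
    ∫ u in Set.Ioi (0 : ℝ),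
        2 / ((Real.Gamma d * Real.Gamma m / Real.Gamma (d + m)) * u) *
          (δ / (δ + k * u^2)) ^ d * (1 - δ / (δ + k * u^2)) ^ m = 1 := by
  set B : ℝ := Real.Gamma d * Real.Gamma m / Real.Gamma (d + m) with hB
  have hdm : (0:ℝ) < (d:ℝ) + (m:ℝ) := by positivity
  have hB0 : 0 < B := by
    apply div_pos (mul_pos (Real.Gamma_pos_of_pos (by exact_mod_cast hd))
      (Real.Gamma_pos_of_pos (by exact_mod_cast hm)))
    have : ((d:ℝ) + m) = ((d + m : ℕ) : ℝ) := by push_cast; ring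
    exact Real.Gamma_pos_of_pos hdm
  set f : ℝ → ℝ := fun u => δ / (δ + k * u ^ 2) with hf
  set f' : ℝ → ℝ := fun u => -(δ * (2 * k * u)) / (δ + k * u ^ 2) ^ 2 with hf'
  have hD : ∀ u : ℝ, 0 < δ + k * u ^ 2 := fun u => by positivity
  have hderiv : ∀ u ∈ Set.Ioi (0:ℝ), HasDerivWithinAt f (f' u) (Set.Ioi 0) u := by
    intro u _
    have h1 : HasDerivAt (fun u : ℝ => δ + k * u ^ 2) (2 * k * u) u := by
      have : HasDerivAt (fun x : ℝ => δ + k * x ^ 2) (k * ((2:ℕ) * u ^ (2 - 1))) u :=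
        ((hasDerivAt_pow 2 u).const_mul k).const_add δ
      convert this using 1
      push_cast; ring
    have : HasDerivAt f ((0 * (δ + k * u ^ 2) - δ * (2 * k * u)) / (δ + k * u ^ 2) ^ 2) u :=
      (hasDerivAt_const u δ).div h1 (hD u).ne'
    simpa [f', zero_mul, zero_sub] using this.hasDerivWithinAt
  have hinj : Set.InjOn f (Set.Ioi 0) := by
    have : StrictAntiOn f (Set.Ioi 0) := by
      intro u hu v hv huv
      apply div_lt_div_of_pos_left hδ (hD u)
      have : u ^ 2 < v ^ 2 := by nlinarith [mem_Ioi.mp hu]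
      nlinarith
    exact this.injOn
  have himg : f '' Set.Ioi 0 = Set.Ioo 0 1 := by
    ext t
    constructor
    · rintro ⟨u, hu, rfl⟩
      have hu' : 0 < u := hu
      constructor
      · exact div_pos hδ (hD u)
      · rw [div_lt_one (hD u)]; nlinarith [mul_pos hk (pow_pos hu' 2)]
    · rintro ⟨ht0, ht1⟩
      refine ⟨Real.sqrt ((δ - δ * t) / (k * t)), ?_, ?_⟩
      · apply Real.sqrt_pos.mpr
        apply div_pos (by nlinarith [mul_lt_mul_of_pos_left ht1 hδ]) (by positivity)
      · have hnum : (0:ℝ) ≤ δ - δ * t := by nlinarith [mul_lt_mul_of_pos_left ht1 hδ]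
        have hnn : (0:ℝ) ≤ (δ - δ * t) / (k * t) := div_nonneg hnum (by positivity)
        have hsq : Real.sqrt ((δ - δ * t) / (k * t)) ^ 2 = (δ - δ * t) / (k * t) :=
          Real.sq_sqrt hnn
        have hden : (0:ℝ) < δ + k * ((δ - δ * t) / (k * t)) := by
          have := mul_nonneg hk.le hnn
          linarith
        simp only [f, hsq]
        rw [div_eq_iff hden.ne']
        field_simp
        ring
  set g : ℝ → ℝ := fun t => (t ^ (d-1) * (1-t) ^ (m-1)) / B with hg
  have step1 : ∫ u in Set.Ioi (0:ℝ),
      2 / (B * u) * (δ / (δ + k * u^2)) ^ d * (1 - δ / (δ + k * u^2)) ^ m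
      = ∫ u in Set.Ioi (0:ℝ), |f' u| • g (f u) := by
    refine setIntegral_congr_fun measurableSet_Ioi fun u hu => ?_
    have hu' : 0 < u := hu
    obtain ⟨d', rfl⟩ : ∃ d', d = d' + 1 := ⟨d - 1, (Nat.succ_pred_eq_of_pos hd).symm⟩
    obtain ⟨m', rfl⟩ : ∃ m', m = m' + 1 := ⟨m - 1, (Nat.succ_pred_eq_of_pos hm).symm⟩
    have hDu := hD u
    have habs : |f' u| = δ * (2 * k * u) / (δ + k * u ^ 2) ^ 2 := by
      rw [hf']
      rw [abs_div, abs_neg, abs_of_nonneg (by positivity), abs_of_nonneg (by positivity)]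
    have h1p : 1 - δ / (δ + k * u ^ 2) = k * u ^ 2 / (δ + k * u ^ 2) := by
      field_simp
      ring
    rw [smul_eq_mul, habs, hg, hf]
    simp only [Nat.add_sub_cancel, h1p]
    rw [div_pow, div_pow, div_pow, div_pow]
    field_simp
    ring
  rw [step1, ← integral_image_eq_integral_abs_deriv_smul measurableSet_Ioi hderiv hinj g, himg]
  have hbeta := real_beta d m hd hm
  have hGdm : Real.Gamma ((d:ℝ) + m) ≠ 0 := (Real.Gamma_pos_of_pos hdm).ne'
  rw [hg]
  rw [← MeasureTheory.integral_Ioc_eq_integral_Ioo, ← intervalIntegral.integral_of_le zero_le_one]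
  rw [intervalIntegral.integral_div]
  rw [hB]
  field_simp at hbeta ⊢
  linarith [hbeta]
end

section
/- Let U have density h(u) = (2/(B(d,m)·u))·p(u)^d·(1-p(u))^m on (0,∞) with p(u) = δ/(δ + k·u²), and suppose d ≥ 1, m ≥ 1. Then E[U] = (B(d - 1/2, m + 1/2)/B(d,m))·√(δ/k), provided d > 1/2. -/
open Real Set MeasureTheory

lemma betaReal (a b : ℝ) (ha : 0 < a) (hb : 0 < b) :
    ∫ x in Set.Ioo (0:ℝ) 1, x ^ (a-1) * (1-x) ^ (b-1) =
      Real.Gamma a * Real.Gamma b / Real.Gamma (a+b) := by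
  have hC := Complex.Gamma_mul_Gamma_eq_betaIntegral (s := (a:ℂ)) (t := (b:ℂ))
      (by simpa using ha) (by simpa using hb)
  have hI : Complex.betaIntegral a b =
      ((∫ x in (0:ℝ)..1, x ^ (a-1) * (1-x) ^ (b-1) : ℝ) : ℂ) := by
    rw [Complex.betaIntegral, ← intervalIntegral.integral_ofReal]
    refine intervalIntegral.integral_congr fun x hx => ?_
    rw [Set.uIcc_of_le (by norm_num : (0:ℝ) ≤ 1)] at hx
    push_cast
    rw [Complex.ofReal_cpow hx.1, Complex.ofReal_cpow (by linarith [hx.2] : (0:ℝ) ≤ 1 - x)]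
    push_cast
    ring
  rw [hI, Complex.Gamma_ofReal, Complex.Gamma_ofReal, ← Complex.ofReal_add,
    Complex.Gamma_ofReal, ← Complex.ofReal_mul, ← Complex.ofReal_mul] at hC
  have h2 := Complex.ofReal_injective hC
  have hG : Real.Gamma (a+b) ≠ 0 := (Real.Gamma_pos_of_pos (by linarith)).ne'
  rw [← MeasureTheory.integral_Ioc_eq_integral_Ioo,
    ← intervalIntegral.integral_of_le (by norm_num : (0:ℝ) ≤ 1)]
  rw [h2]
  field_simp

theorem predictive_mean (d m : ℕ) (hd : 1 ≤ d) (hm : 1 ≤ m)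
    (k δ : ℝ) (hk : 0 < k) (hδ : 0 < δ) (hd2 : (1 : ℝ) / 2 < d) :
    ∫ u in Set.Ioi (0 : ℝ),
        u * (2 / ((Real.Gamma d * Real.Gamma m / Real.Gamma (d + m)) * u) *
          (δ / (δ + k * u^2)) ^ d * (1 - δ / (δ + k * u^2)) ^ m)
      = (Real.Gamma ((d : ℝ) - 1/2) * Real.Gamma ((m : ℝ) + 1/2) /
            Real.Gamma ((d : ℝ) - 1/2 + ((m : ℝ) + 1/2))) /
          (Real.Gamma d * Real.Gamma m / Real.Gamma (d + m)) * Real.sqrt (δ / k) := by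
  set B : ℝ := Real.Gamma d * Real.Gamma m / Real.Gamma (d + m) with hB
  have hdpos : (0:ℝ) < d := by positivity
  have hmpos : (0:ℝ) < m := by exact_mod_cast hm
  have hBpos : 0 < B := by
    apply div_pos (mul_pos (Real.Gamma_pos_of_pos hdpos) (Real.Gamma_pos_of_pos hmpos))
    exact Real.Gamma_pos_of_pos (by push_cast; linarith)
  set c : ℝ := Real.sqrt (δ / k) with hc
  have hcpos : 0 < c := Real.sqrt_pos.2 (div_pos hδ hk)
  have hc2 : c ^ 2 = δ / k := Real.sq_sqrt (div_pos hδ hk).le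
  set f : ℝ → ℝ := fun x => c * Real.sqrt (x⁻¹ - 1) with hf
  set f' : ℝ → ℝ := fun x => c * (-(x ^ 2)⁻¹ / (2 * Real.sqrt (x⁻¹ - 1))) with hf'
  -- basic facts on Ioo 0 1
  have hinn : ∀ x ∈ Set.Ioo (0:ℝ) 1, 0 < x⁻¹ - 1 := by
    intro x hx
    have : 1 < x⁻¹ := (one_lt_inv_iff₀).2 ⟨hx.1, hx.2⟩
    linarith
  have hfpos : ∀ x ∈ Set.Ioo (0:ℝ) 1, 0 < f x := fun x hx =>
    mul_pos hcpos (Real.sqrt_pos.2 (hinn x hx))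
  -- image
  have himg : f '' Set.Ioo 0 1 = Set.Ioi (0:ℝ) := by
    apply Set.Subset.antisymm
    · rintro _ ⟨x, hx, rfl⟩; exact hfpos x hx
    · intro u hu
      have hu0 : (0:ℝ) < u := hu
      have hden : 0 < δ + k * u ^ 2 := by positivity
      refine ⟨δ / (δ + k * u ^ 2), ⟨by positivity, ?_⟩, ?_⟩
      · rw [div_lt_one hden]
        have : 0 < k * u ^ 2 := by positivity
        linarith
      · show c * Real.sqrt ((δ / (δ + k * u ^ 2))⁻¹ - 1) = u
        have h1 : (δ / (δ + k * u ^ 2))⁻¹ - 1 = k * u ^ 2 / δ := by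
          field_simp
          ring
        rw [h1, hc, ← Real.sqrt_mul (div_pos hδ hk).le]
        have : δ / k * (k * u ^ 2 / δ) = u ^ 2 := by field_simp
        rw [this, Real.sqrt_sq hu0.le]
  -- injectivity
  have hinj : Set.InjOn f (Set.Ioo 0 1) := by
    have : StrictAntiOn f (Set.Ioo 0 1) := by
      intro x hx y hy hxy
      apply mul_lt_mul_of_pos_left _ hcpos
      apply Real.sqrt_lt_sqrt (hinn y hy).le
      have := one_div_lt_one_div_of_lt hx.1 hxy
      simp only [one_div] at this
      linarith
    exact this.injOn
  -- derivative
  have hderiv : ∀ x ∈ Set.Ioo (0:ℝ) 1, HasDerivWithinAt f (f' x) (Set.Ioo 0 1) x := by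
    intro x hx
    have h1 : HasDerivAt (fun y : ℝ => y⁻¹ - 1) (-(x ^ 2)⁻¹) x :=
      (hasDerivAt_inv hx.1.ne').sub_const 1
    have h2 := (h1.sqrt (hinn x hx).ne').const_mul c
    simpa [hf, hf', mul_div_assoc] using h2.hasDerivWithinAt
  rw [← himg, MeasureTheory.integral_image_eq_integral_abs_deriv_smul
    measurableSet_Ioo hderiv hinj]
  have key : ∀ x ∈ Set.Ioo (0:ℝ) 1,
      |f' x| • (f x * (2 / (B * f x) * (δ / (δ + k * f x ^ 2)) ^ d *
        (1 - δ / (δ + k * f x ^ 2)) ^ m))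
      = c / B * (x ^ ((d:ℝ) - 1/2 - 1) * (1 - x) ^ ((m:ℝ) + 1/2 - 1)) := by
    intro x hx
    have hx0 : 0 < x := hx.1
    have hx1 : x < 1 := hx.2
    have h1x : 0 < 1 - x := by linarith
    have hw : 0 < x⁻¹ - 1 := hinn x hx
    have hfx : 0 < f x := hfpos x hx
    have hfsq : f x ^ 2 = δ / k * (x⁻¹ - 1) := by
      show (c * Real.sqrt (x⁻¹ - 1)) ^ 2 = _
      rw [mul_pow, Real.sq_sqrt hw.le, hc2]
    have hbase : δ / (δ + k * f x ^ 2) = x := by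
      rw [hfsq]; field_simp; ring
    rw [hbase]
    have habs : |f' x| = c * ((x ^ 2)⁻¹ / (2 * Real.sqrt (x⁻¹ - 1))) := by
      show |c * (-(x ^ 2)⁻¹ / (2 * Real.sqrt (x⁻¹ - 1)))| = _
      rw [abs_mul, abs_of_pos hcpos, abs_div, abs_neg,
        abs_of_pos (by positivity : (0:ℝ) < (x ^ 2)⁻¹),
        abs_of_pos (by positivity : (0:ℝ) < 2 * Real.sqrt (x⁻¹ - 1))]
    have hsq : Real.sqrt (x⁻¹ - 1) = Real.sqrt (1 - x) / Real.sqrt x := by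
      rw [show x⁻¹ - 1 = (1 - x) / x by field_simp, Real.sqrt_div h1x.le]
    have hxd : x ^ ((d:ℝ) - 1/2 - 1) = x ^ d * (Real.sqrt x * (x ^ 2)⁻¹) := by
      rw [show (d:ℝ) - 1/2 - 1 = (d:ℝ) + (1/2 + (-2 : ℝ)) by ring,
        Real.rpow_add hx0, Real.rpow_add hx0, Real.rpow_natCast,
        ← Real.sqrt_eq_rpow,
        show ((-2 : ℝ)) = ((-2 : ℤ) : ℝ) by norm_num, Real.rpow_intCast,
        zpow_neg]
      norm_num
    have hxm : (1 - x) ^ ((m:ℝ) + 1/2 - 1) = (1 - x) ^ m * (Real.sqrt (1 - x))⁻¹ := by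
      rw [show (m:ℝ) + 1/2 - 1 = (m:ℝ) + (-(1/2) : ℝ) by ring,
        Real.rpow_add h1x, Real.rpow_natCast, Real.rpow_neg h1x.le,
        ← Real.sqrt_eq_rpow]
    rw [habs, hsq, hxd, hxm, smul_eq_mul]
    have hsx : Real.sqrt x ≠ 0 := by positivity
    have hs1x : Real.sqrt (1 - x) ≠ 0 := by positivity
    field_simp
  rw [MeasureTheory.setIntegral_congr_fun measurableSet_Ioo key,
    MeasureTheory.integral_const_mul,
    betaReal ((d:ℝ) - 1/2) ((m:ℝ) + 1/2) (by linarith) (by positivity)]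
  ring
end

section
/- The median point predictor under absolute error loss equals Û* = √((1 - Med)·δ/(k·Med)), where Med is the median of the Beta(d,m) distribution; i.e., if U has density h(u) = (2/(B(d,m)·u))·p(u)^d·(1-p(u))^m with p(u) = δ/(δ+k·u²), then P(U ≤ Û*) = 1/2. -/
open Real Set MeasureTheory

lemma real_beta_nat (a b : ℕ) :
    ∫ x in (0:ℝ)..1, x ^ a * (1 - x) ^ b =
      (Nat.factorial a : ℝ) * Nat.factorial b / Nat.factorial (a + b + 1) := by
  have h1 : Complex.Gamma (a+1) * Complex.Gamma (b+1) =
      Complex.Gamma ((a+1)+(b+1)) * Complex.betaIntegral (a+1) (b+1) :=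
    Complex.Gamma_mul_Gamma_eq_betaIntegral (by simp; positivity) (by simp; positivity)
  have h2 : Complex.betaIntegral (a+1) (b+1) =
      ((∫ x in (0:ℝ)..1, x ^ a * (1 - x) ^ b : ℝ) : ℂ) := by
    rw [Complex.betaIntegral, ← intervalIntegral.integral_ofReal]
    refine intervalIntegral.integral_congr fun x _ => ?_
    push_cast [add_sub_cancel_right, Complex.cpow_natCast]
    ring
  have hga : Complex.Gamma (a+1) = Nat.factorial a := by
    exact_mod_cast Complex.Gamma_nat_eq_factorial a
  have hgb : Complex.Gamma (b+1) = Nat.factorial b := by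
    exact_mod_cast Complex.Gamma_nat_eq_factorial b
  have hgab : Complex.Gamma ((a:ℂ)+1+(b+1)) = Nat.factorial (a+b+1) := by
    have : ((a:ℂ)+1+(b+1)) = ((a+b+1 : ℕ) : ℂ) + 1 := by push_cast; ring
    rw [this]
    exact_mod_cast Complex.Gamma_nat_eq_factorial (a+b+1)
  rw [h2, hga, hgb, hgab] at h1
  have hne : ((Nat.factorial (a+b+1) : ℂ)) ≠ 0 :=
    Nat.cast_ne_zero.mpr (Nat.factorial_ne_zero _)
  have : ((∫ x in (0:ℝ)..1, x ^ a * (1 - x) ^ b : ℝ) : ℂ) =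
      (Nat.factorial a : ℂ) * Nat.factorial b / Nat.factorial (a + b + 1) := by
    rw [eq_div_iff hne]
    linear_combination -h1
  apply Complex.ofReal_injective
  push_cast
  exact this

theorem median_predictor (d m : ℕ) (hd : 1 ≤ d) (hm : 1 ≤ m)
    (k δ : ℝ) (hk : 0 < k) (hδ : 0 < δ)
    (Med : ℝ) (hMed0 : 0 < Med) (hMed1 : Med < 1)
    (hMed : (∫ s in (0 : ℝ)..Med, s ^ (d - 1) * (1 - s) ^ (m - 1)) /
        (Real.Gamma d * Real.Gamma m / Real.Gamma (d + m)) = 1 / 2)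
    (h : ℝ → ℝ)
    (hh : ∀ u, h u = 2 / ((Real.Gamma d * Real.Gamma m / Real.Gamma (d + m)) * u) *
      (δ / (δ + k * u^2)) ^ d * (1 - δ / (δ + k * u^2)) ^ m) :
    ∫ u in Set.Ioc (0 : ℝ) (Real.sqrt ((1 - Med) * δ / (k * Med))), h u = 1 / 2 := by
  obtain ⟨a, rfl⟩ : ∃ a, d = a + 1 := ⟨d - 1, (Nat.succ_pred_eq_of_pos hd).symm⟩
  obtain ⟨b, rfl⟩ : ∃ b, m = b + 1 := ⟨m - 1, (Nat.succ_pred_eq_of_pos hm).symm⟩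
  set B : ℝ := Real.Gamma (a+1 : ℕ) * Real.Gamma (b+1 : ℕ) / Real.Gamma ((a+1 : ℕ) + ((b+1:ℕ):ℝ)) with hBdef
  simp only [Nat.add_sub_cancel] at hMed
  clear_value B
  have hMlt : (0:ℝ) < 1 - Med := by linarith
  -- B = a! b! / (a+b+1)!
  have hB : B = (Nat.factorial a : ℝ) * Nat.factorial b / Nat.factorial (a + b + 1) := by
    rw [hBdef]
    have h1 : ((a + 1 : ℕ) : ℝ) = (a : ℝ) + 1 := by push_cast; ring
    have h2 : ((b + 1 : ℕ) : ℝ) = (b : ℝ) + 1 := by push_cast; ring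
    have h3 : ((a + 1 : ℕ) : ℝ) + ((b + 1 : ℕ) : ℝ) = ((a + b + 1 : ℕ) : ℝ) + 1 := by
      push_cast; ring
    rw [h3, h1, h2, Real.Gamma_nat_eq_factorial, Real.Gamma_nat_eq_factorial,
      Real.Gamma_nat_eq_factorial]
  have hB0 : 0 < B := by
    rw [hB]
    positivity
  have hI1 : (∫ x in (0:ℝ)..1, x ^ a * (1 - x) ^ b) = B := by
    rw [real_beta_nat, hB]
  have hIMed : (∫ s in (0:ℝ)..Med, s ^ a * (1 - s) ^ b) = B / 2 := by
    field_simp at hMed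
    linarith
  set Uh : ℝ := √((1 - Med) * δ / (k * Med)) with hUhdef
  have hUh0 : 0 ≤ Uh := Real.sqrt_nonneg _
  have hUhsq : Uh ^ 2 = (1 - Med) * δ / (k * Med) := Real.sq_sqrt (by positivity)
  clear_value Uh
  set f : ℝ → ℝ := fun u => δ / (δ + k * u ^ 2) with hfdef
  set f' : ℝ → ℝ := fun u => -(2 * k * δ * u) / (δ + k * u ^ 2) ^ 2 with hf'def
  set g : ℝ → ℝ := fun s => -(s ^ a * (1 - s) ^ b / B) with hgdef
  clear_value f f' g
  have hden : ∀ u : ℝ, δ + k * u ^ 2 ≠ 0 := fun u => by positivity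
  have hderiv : ∀ x : ℝ, HasDerivAt f (f' x) x := by
    intro x
    rw [hfdef]
    have h1 : HasDerivAt (fun u : ℝ => δ + k * u ^ 2) (k * (2 * x)) x := by
      simpa using ((hasDerivAt_pow 2 x).const_mul k).const_add δ
    have h2 : HasDerivAt (fun u : ℝ => δ / (δ + k * u ^ 2)) _ x := (hasDerivAt_const x δ).div h1 (hden x)
    convert h2 using 1
    simp only [hf'def]
    field_simp
    ring
  have hcontf' : Continuous f' := by
    simp only [hf'def]
    exact Continuous.div (by fun_prop) (by fun_prop) fun x => pow_ne_zero _ (hden x)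
  have hcontg : Continuous g := by
    simp only [hgdef]
    continuity
  -- pointwise identity
  have hpt : ∀ u : ℝ, h u = f' u • g (f u) := by
    intro u
    rcases eq_or_ne u 0 with rfl | hu
    · simp [hh, hf'def]
    · rw [hh]
      simp only [hfdef, hf'def, hgdef, smul_eq_mul]
      have hD := hden u
      rw [div_pow, div_pow, one_sub_div hD, div_pow, div_pow]
      field_simp
      ring
  calc ∫ u in Set.Ioc (0:ℝ) Uh, h u
      = ∫ u in (0:ℝ)..Uh, f' u • (g ∘ f) u := by
        rw [← intervalIntegral.integral_of_le hUh0]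
        exact intervalIntegral.integral_congr fun x _ => hpt x
    _ = ∫ s in (f 0)..(f Uh), g s := by
        exact intervalIntegral.integral_comp_smul_deriv (fun x _ => hderiv x)
          hcontf'.continuousOn hcontg
    _ = 1 / 2 := by
        have hf0 : f 0 = 1 := by simp [hfdef, hδ.ne']
        have hfUh : f Uh = Med := by
          simp only [hfdef, hUhsq]
          field_simp
          ring
        rw [hf0, hfUh]
        have hsplit : (∫ s in (0:ℝ)..Med, s ^ a * (1 - s) ^ b) +
            (∫ s in Med..(1:ℝ), s ^ a * (1 - s) ^ b) = ∫ s in (0:ℝ)..1, s ^ a * (1 - s) ^ b :=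
          intervalIntegral.integral_add_adjacent_intervals
            (Continuous.intervalIntegrable (by fun_prop) _ _)
            (Continuous.intervalIntegrable (by fun_prop) _ _)
        have hI2 : (∫ s in Med..(1:ℝ), s ^ a * (1 - s) ^ b) = B / 2 := by
          rw [hIMed, hI1] at hsplit; linarith
        have hgc : ∀ s : ℝ, g s = (-(1/B)) * (s ^ a * (1 - s) ^ b) := by
          intro s; simp only [hgdef]; ring
        rw [intervalIntegral.integral_congr (fun s _ => hgc s),
          intervalIntegral.integral_const_mul, intervalIntegral.integral_symm, hI2]
        field_simp
end
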